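/- Let ρ be a permutation of {1,…,n} with 312-height vector (h_1,…,h_n). Suppose that the path ψ_{(3,1,2)}(ρ) has a jump of depth d ≥ 1 at position i (d = h_i − h_{i+1} − 1 ≥ 1), followed immediately by l ≥ 1 consecutive down-steps (h_{i+j+1} = h_{i+j} − 1 for 1 ≤ j ≤ l−1, i+l ≤ n), and preceded immediately by m ≥ 1 consecutive down-steps including the preceding left-to-right maximum; that is, h_{p+1} = h_p − 1 for all i−m+1 ≤ p ≤ i−1, the entry ρ_{i−m+1} is a left-to-right maximum, and no ρ_p with i−m+1 < p ≤ i is a left-to-right maximum. Let K = {k : i < k ≤ n, ρ_{i+1} < ρ_k < ρ_i}. Then |K| = d, and for all 1 ≤ g ≤ m, 1 ≤ j ≤ l, and k ∈ K, the triple (i−g+1, i+j, k) is an occurrence of the pattern (3,1,2) in ρ (i.e., ρ_{i−g+1} > ρ_k > ρ_{i+j}); this yields exactly m·d·l occurrences of (3,1,2) of this type. -/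

import Mathlib

/-- An entry `ρ i` is a left-to-right maximum if it is greater than all entries to its left. -/
def IsLRMax {n : ℕ} (ρ : Equiv.Perm (Fin n)) (i : Fin n) : Prop :=
  ∀ j, j < i → ρ j < ρ i

/-- The 312-height of entry `i` of `ρ`: the number of entries to the right of `i`
that are smaller than `ρ i`. -/
def height312 {n : ℕ} (ρ : Equiv.Perm (Fin n)) (i : Fin n) : ℕ :=
  (Finset.univ.filter (fun k => i < k ∧ ρ k < ρ i)).card


open Finset

lemma h_mono {n : ℕ} (ρ : Equiv.Perm (Fin n)) (p p' : Fin n)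
    (hp : (p' : ℕ) = (p : ℕ) + 1) (hlt : ρ p < ρ p') :
    height312 ρ p ≤ height312 ρ p' := by
  apply Finset.card_le_card
  intro k hk
  simp only [Finset.mem_filter, Finset.mem_univ, true_and] at hk ⊢
  obtain ⟨h1, h2⟩ := hk
  have hne : k ≠ p' := by
    intro he; rw [he] at h2; exact absurd (h2.trans hlt) (lt_irrefl _)
  have hv : (p' : ℕ) ≤ (k : ℕ) := by have := Fin.lt_def.mp h1; omega
  refine ⟨Fin.lt_def.mpr (lt_of_le_of_ne hv ?_), h2.trans hlt⟩
  exact fun he => hne (Fin.ext he.symm)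

lemma h_desc {n : ℕ} (ρ : Equiv.Perm (Fin n)) (p p' : Fin n)
    (hp : (p' : ℕ) = (p : ℕ) + 1) (hlt : height312 ρ p' < height312 ρ p) :
    ρ p' < ρ p := by
  rcases lt_trichotomy (ρ p') (ρ p) with hc | hc | hc
  · exact hc
  · exfalso
    have he : (p' : ℕ) = (p : ℕ) := congrArg Fin.val (ρ.injective hc)
    omega
  · exact absurd (h_mono ρ p p' hp hc) (by omega)

lemma h_split {n : ℕ} (ρ : Equiv.Perm (Fin n)) (p p' : Fin n)
    (hp : (p' : ℕ) = (p : ℕ) + 1) (hlt : ρ p' < ρ p) :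
    height312 ρ p = height312 ρ p' + 1 +
      (Finset.univ.filter (fun k => p' < k ∧ ρ p' < ρ k ∧ ρ k < ρ p)).card := by
  classical
  unfold height312
  have h1 : (Finset.univ.filter (fun k => p < k ∧ ρ k < ρ p)) =
      insert p' (Finset.univ.filter (fun k => p' < k ∧ ρ k < ρ p)) := by
    ext k
    simp only [Finset.mem_filter, Finset.mem_univ, true_and, Finset.mem_insert]
    constructor
    · rintro ⟨hk1, hk2⟩
      rcases eq_or_lt_of_le (show (p' : ℕ) ≤ (k : ℕ) by
        have := Fin.lt_def.mp hk1; omega) with he | hlt'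
      · exact Or.inl (Fin.ext he.symm)
      · exact Or.inr ⟨Fin.lt_def.mpr hlt', hk2⟩
    · rintro (he | ⟨hk1, hk2⟩)
      · subst he; exact ⟨Fin.lt_def.mpr (by omega), hlt⟩
      · exact ⟨Fin.lt_def.mpr (by have := Fin.lt_def.mp hk1; omega), hk2⟩
  rw [h1, Finset.card_insert_of_notMem (by
    simp only [Finset.mem_filter, Finset.mem_univ, true_and]
    exact fun hc => absurd hc.1 (lt_irrefl _))]
  have h2 : (Finset.univ.filter (fun k => p' < k ∧ ρ k < ρ p)) =
      (Finset.univ.filter (fun k => p' < k ∧ ρ k < ρ p')) ∪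
      (Finset.univ.filter (fun k => p' < k ∧ ρ p' < ρ k ∧ ρ k < ρ p)) := by
    ext k
    simp only [Finset.mem_filter, Finset.mem_univ, true_and, Finset.mem_union]
    constructor
    · rintro ⟨hk1, hk2⟩
      rcases lt_trichotomy (ρ k) (ρ p') with hc | hc | hc
      · exact Or.inl ⟨hk1, hc⟩
      · exact absurd (ρ.injective hc) (by intro he; rw [he] at hk1; exact lt_irrefl _ hk1)
      · exact Or.inr ⟨hk1, hc, hk2⟩
    · rintro (⟨hk1, hk2⟩ | ⟨hk1, hk2, hk3⟩)
      · exact ⟨hk1, hk2.trans hlt⟩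
      · exact ⟨hk1, hk3⟩
  rw [h2, Finset.card_union_of_disjoint (by
    rw [Finset.disjoint_left]
    intro k hk1 hk2
    simp only [Finset.mem_filter, Finset.mem_univ, true_and] at hk1 hk2
    exact absurd (hk1.2.trans hk2.2.1) (lt_irrefl _))]
  have : (p' : Fin n) < (p' : Fin n) ∨ True := Or.inr trivial
  omega
set_option maxHeartbeats 1000000 in
theorem jump_with_preceding_downsteps_gives_312_occurrences {n : ℕ}
    (ρ : Equiv.Perm (Fin n)) (d l m : ℕ)
    (hd : 1 ≤ d) (hl : 1 ≤ l) (hm : 1 ≤ m)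
    (i : Fin n) (hil : (i : ℕ) + l < n) (hmi : m ≤ (i : ℕ) + 1)
    (h : ℕ → ℕ) (hh : ∀ p : Fin n, h (p : ℕ) = height312 ρ p)
    (hjump : h ((i : ℕ) + 1) + 1 + d = h (i : ℕ))
    (hdown : ∀ j, 1 ≤ j → j ≤ l - 1 → h ((i : ℕ) + j + 1) + 1 = h ((i : ℕ) + j))
    (hdownpre : ∀ p, (i : ℕ) + 1 ≤ p + m → p + 1 ≤ (i : ℕ) → h (p + 1) + 1 = h p)
    (hpremax : IsLRMax ρ ⟨(i : ℕ) + 1 - m, by omega⟩)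
    (hprelast : ∀ p : Fin n, (i : ℕ) + 1 - m < (p : ℕ) → p ≤ i → ¬ IsLRMax ρ p)
    (K : Finset (Fin n))
    (hK : K = Finset.univ.filter (fun k =>
      i < k ∧ ρ ⟨(i : ℕ) + 1, by omega⟩ < ρ k ∧ ρ k < ρ i)) :
    K.card = d ∧
    (∀ g, ∀ _hg1 : 1 ≤ g, ∀ _hg2 : g ≤ m, ∀ j, ∀ _hj1 : 1 ≤ j, ∀ _hj2 : j ≤ l, ∀ k ∈ K,
      (⟨(i : ℕ) + 1 - g, by omega⟩ : Fin n) < (⟨(i : ℕ) + j, by omega⟩ : Fin n) ∧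
      (⟨(i : ℕ) + j, by omega⟩ : Fin n) < k ∧
      ρ (⟨(i : ℕ) + j, by omega⟩ : Fin n) < ρ k ∧
      ρ k < ρ (⟨(i : ℕ) + 1 - g, by omega⟩ : Fin n)) ∧
    (Finset.univ.filter (fun t : Fin n × Fin n × Fin n =>
      (i : ℕ) < (t.1 : ℕ) + m ∧ t.1 ≤ i ∧
      i < t.2.1 ∧ (t.2.1 : ℕ) ≤ (i : ℕ) + l ∧ t.2.2 ∈ K ∧
      t.1 < t.2.1 ∧ t.2.1 < t.2.2 ∧
      ρ t.2.1 < ρ t.2.2 ∧ ρ t.2.2 < ρ t.1)).card = m * d * l := by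
  classical
  set i1 : Fin n := ⟨(i : ℕ) + 1, by omega⟩ with hi1
  have hhi : h (i : ℕ) = height312 ρ i := hh i
  have hhi1 : h ((i : ℕ) + 1) = height312 ρ i1 := hh i1
  -- the descent at i
  have hdesc0 : ρ i1 < ρ i := h_desc ρ i i1 rfl (by omega)
  -- K rewritten with i1 < k
  have hKeq : K = Finset.univ.filter (fun k => i1 < k ∧ ρ i1 < ρ k ∧ ρ k < ρ i) := by
    rw [hK]
    ext k
    simp only [Finset.mem_filter, Finset.mem_univ, true_and]
    constructor
    · rintro ⟨h1, h2, h3⟩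
      refine ⟨Fin.lt_def.mpr ?_, h2, h3⟩
      have hv := Fin.lt_def.mp h1
      have hne : k ≠ i1 := fun he => absurd h2 (by rw [he]; exact lt_irrefl _)
      have : (i1 : ℕ) ≠ (k : ℕ) := fun he => hne (Fin.ext he.symm)
      simp only [hi1] at this ⊢
      omega
    · rintro ⟨h1, h2, h3⟩
      exact ⟨Fin.lt_def.mpr (by have := Fin.lt_def.mp h1; simp only [hi1] at this; omega),
        h2, h3⟩
  -- card K = d
  have hsplit := h_split ρ i i1 rfl hdesc0
  have hcardK : K.card = d := by rw [hKeq]; omega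
  -- descending chain after i
  have chainA : ∀ j, ∀ _h1 : 1 ≤ j, ∀ _h2 : j ≤ l,
      ρ (⟨(i : ℕ) + j, by omega⟩ : Fin n) ≤ ρ i1 := by
    intro j
    induction j with
    | zero => intro h1 _; omega
    | succ j ih =>
      intro _ h2
      rcases Nat.eq_zero_or_pos j with hj0 | hj1
      · subst hj0
        exact le_of_eq (congrArg ρ (Fin.ext rfl))
      · have hds := hdown j hj1 (by omega)
        have e1 : h ((i : ℕ) + j) = height312 ρ (⟨(i : ℕ) + j, by omega⟩ : Fin n) :=
          hh (⟨(i : ℕ) + j, by omega⟩ : Fin n)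
        have e2 : h ((i : ℕ) + j + 1) =
            height312 ρ (⟨(i : ℕ) + (j + 1), by omega⟩ : Fin n) :=
          hh (⟨(i : ℕ) + (j + 1), by omega⟩ : Fin n)
        have := h_desc ρ (⟨(i : ℕ) + j, by omega⟩ : Fin n)
          (⟨(i : ℕ) + (j + 1), by omega⟩ : Fin n) rfl (by omega)
        exact le_of_lt (lt_of_lt_of_le this (ih hj1 (by omega)))
  -- ascending chain before i
  have chainB : ∀ g, ∀ _h1 : 1 ≤ g, ∀ _h2 : g ≤ m,
      ρ i ≤ ρ (⟨(i : ℕ) + 1 - g, by omega⟩ : Fin n) := by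
    intro g
    induction g with
    | zero => intro h1 _; omega
    | succ g ih =>
      intro _ h2
      rcases Nat.eq_zero_or_pos g with hg0 | hg1
      · subst hg0
        exact le_of_eq (congrArg ρ (Fin.ext (by simp)))
      · have hgi : g ≤ (i : ℕ) := by omega
        have ihg := ih hg1 (by omega)
        have hds := hdownpre ((i : ℕ) - g) (by omega) (by omega)
        have e1 : h ((i : ℕ) - g) =
            height312 ρ (⟨(i : ℕ) - g, by omega⟩ : Fin n) :=
          hh (⟨(i : ℕ) - g, by omega⟩ : Fin n)
        have e2 : h ((i : ℕ) - g + 1) =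
            height312 ρ (⟨(i : ℕ) - g + 1, by omega⟩ : Fin n) :=
          hh (⟨(i : ℕ) - g + 1, by omega⟩ : Fin n)
        have hd2 := h_desc ρ (⟨(i : ℕ) - g, by omega⟩ : Fin n)
          (⟨(i : ℕ) - g + 1, by omega⟩ : Fin n) rfl (by omega)
        have e3 : (⟨(i : ℕ) + 1 - g, by omega⟩ : Fin n) =
            (⟨(i : ℕ) - g + 1, by omega⟩ : Fin n) :=
          Fin.ext (show (i : ℕ) + 1 - g = (i : ℕ) - g + 1 by omega)
        rw [e3] at ihg
        refine le_of_lt ?_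
        have goal' : ρ i < ρ (⟨(i : ℕ) - g, by omega⟩ : Fin n) :=
          lt_of_le_of_lt ihg hd2
        convert goal' using 3
        · rfl
        omega
  -- every k in K lies beyond i + l
  have hKbig : ∀ k ∈ K, (i : ℕ) + l < (k : ℕ) := by
    intro k hk
    rw [hKeq] at hk
    simp only [Finset.mem_filter, Finset.mem_univ, true_and] at hk
    obtain ⟨hk1, hk2, hk3⟩ := hk
    by_contra hle
    push_neg at hle
    have hv := Fin.lt_def.mp hk1
    simp only [hi1] at hv
    set j := (k : ℕ) - (i : ℕ) with hj
    have hkeq : k = (⟨(i : ℕ) + j, by omega⟩ : Fin n) :=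
      Fin.ext (show (k : ℕ) = (i : ℕ) + j by omega)
    have := chainA j (by omega) (by omega)
    rw [hkeq] at hk2
    exact absurd (lt_of_lt_of_le hk2 this) (lt_irrefl _)
  have hKlow : ∀ k ∈ K, ρ i1 < ρ k ∧ ρ k < ρ i := by
    intro k hk
    rw [hKeq] at hk
    simp only [Finset.mem_filter, Finset.mem_univ, true_and] at hk
    exact ⟨hk.2.1, hk.2.2⟩
  -- part 2
  have part2 : ∀ g, ∀ _hg1 : 1 ≤ g, ∀ _hg2 : g ≤ m, ∀ j, ∀ _hj1 : 1 ≤ j, ∀ _hj2 : j ≤ l,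
      ∀ k ∈ K,
      (⟨(i : ℕ) + 1 - g, by omega⟩ : Fin n) < (⟨(i : ℕ) + j, by omega⟩ : Fin n) ∧
      (⟨(i : ℕ) + j, by omega⟩ : Fin n) < k ∧
      ρ (⟨(i : ℕ) + j, by omega⟩ : Fin n) < ρ k ∧
      ρ k < ρ (⟨(i : ℕ) + 1 - g, by omega⟩ : Fin n) := by
    intro g hg1 hg2 j hj1 hj2 k hk
    obtain ⟨hl1, hl2⟩ := hKlow k hk
    have hb := hKbig k hk
    refine ⟨Fin.mk_lt_mk.mpr (by omega),
      Fin.lt_def.mpr (show (i : ℕ) + j < (k : ℕ) by omega), ?_, ?_⟩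
    · exact lt_of_le_of_lt (chainA j hj1 hj2) hl1
    · exact lt_of_lt_of_le hl2 (chainB g hg1 hg2)
  refine ⟨hcardK, part2, ?_⟩
  -- part 3
  set S1 : Finset (Fin n) :=
    Finset.univ.filter (fun t : Fin n => (i : ℕ) < (t : ℕ) + m ∧ t ≤ i) with hS1def
  set S2 : Finset (Fin n) :=
    Finset.univ.filter (fun t : Fin n => i < t ∧ (t : ℕ) ≤ (i : ℕ) + l) with hS2def
  have hprod : (Finset.univ.filter (fun t : Fin n × Fin n × Fin n =>
      (i : ℕ) < (t.1 : ℕ) + m ∧ t.1 ≤ i ∧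
      i < t.2.1 ∧ (t.2.1 : ℕ) ≤ (i : ℕ) + l ∧ t.2.2 ∈ K ∧
      t.1 < t.2.1 ∧ t.2.1 < t.2.2 ∧
      ρ t.2.1 < ρ t.2.2 ∧ ρ t.2.2 < ρ t.1)) = S1 ×ˢ S2 ×ˢ K := by
    ext ⟨t1, t2, t3⟩
    simp only [Finset.mem_filter, Finset.mem_univ, true_and, Finset.mem_product,
      hS1def, hS2def]
    constructor
    · rintro ⟨a1, a2, a3, a4, a5, _⟩
      exact ⟨⟨a1, a2⟩, ⟨a3, a4⟩, a5⟩
    · rintro ⟨⟨a1, a2⟩, ⟨a3, a4⟩, a5⟩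
      have hv1 : (t1 : ℕ) ≤ (i : ℕ) := Fin.le_def.mp a2
      have hv2 : (i : ℕ) < (t2 : ℕ) := Fin.lt_def.mp a3
      set g := (i : ℕ) + 1 - (t1 : ℕ) with hg
      set j := (t2 : ℕ) - (i : ℕ) with hj
      have ht1 : t1 = (⟨(i : ℕ) + 1 - g, by omega⟩ : Fin n) :=
        Fin.ext (show (t1 : ℕ) = (i : ℕ) + 1 - g by omega)
      have ht2 : t2 = (⟨(i : ℕ) + j, by omega⟩ : Fin n) :=
        Fin.ext (show (t2 : ℕ) = (i : ℕ) + j by omega)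
      obtain ⟨b1, b2, b3, b4⟩ := part2 g (by omega) (by omega) j (by omega) (by omega)
        t3 a5
      refine ⟨a1, a2, a3, a4, a5, Fin.lt_def.mpr (by omega), ?_, ?_, ?_⟩
      · rw [ht2]; exact b2
      · rw [ht2]; exact b3
      · rw [ht1]; exact b4
  rw [hprod, Finset.card_product, Finset.card_product]
  have hS1card : S1.card = m := by
    rw [hS1def]
    refine Eq.trans ?_ (show (Finset.Ico ((i : ℕ) + 1 - m) ((i : ℕ) + 1)).card = m by
      rw [Nat.card_Ico]; omega)
    refine Finset.card_bij' (fun (a : Fin n) _ => (a : ℕ))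
      (fun b hb => (⟨b, by simp only [Finset.mem_Ico] at hb; omega⟩ : Fin n))
      ?_ ?_ ?_ ?_
    · intro a ha
      simp only [Finset.mem_filter, Finset.mem_univ, true_and] at ha
      simp only [Finset.mem_Ico]
      have := Fin.le_def.mp ha.2
      omega
    · intro b hb
      simp only [Finset.mem_Ico] at hb
      simp only [Finset.mem_filter, Finset.mem_univ, true_and]
      exact ⟨by omega, Fin.le_def.mpr (show b ≤ (i : ℕ) by omega)⟩
    · intro a ha; exact Fin.ext rfl
    · intro b hb; rfl
  have hS2card : S2.card = l := by
    rw [hS2def]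
    refine Eq.trans ?_ (show (Finset.Ico ((i : ℕ) + 1) ((i : ℕ) + l + 1)).card = l by
      rw [Nat.card_Ico]; omega)
    refine Finset.card_bij' (fun (a : Fin n) _ => (a : ℕ))
      (fun b hb => (⟨b, by simp only [Finset.mem_Ico] at hb; omega⟩ : Fin n))
      ?_ ?_ ?_ ?_
    · intro a ha
      simp only [Finset.mem_filter, Finset.mem_univ, true_and] at ha
      simp only [Finset.mem_Ico]
      have := Fin.lt_def.mp ha.1
      omega
    · intro b hb
      simp only [Finset.mem_Ico] at hb
      simp only [Finset.mem_filter, Finset.mem_univ, true_and]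
      exact ⟨Fin.lt_def.mpr (show (i : ℕ) < b by omega), by omega⟩
    · intro a ha; exact Fin.ext rfl
    · intro b hb; rfl
  rw [hS1card, hS2card, hcardK]
  ring
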